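/- arXiv:1812.04952 — 2 statements merged into one kernel-verified Lean document; each statement's English description precedes it below -/
import Mathlib

section
/- Let 1 < p < ∞ and D = 2^{d(p+1)/(p-1)}. Suppose Q ⊂ Q_0 are dyadic cubes in ℝ^d with Q_0 = Q^{(m)}, and suppose σ(Q^{(k+1)}) ≥ D σ(Q^{(k)}) for all 0 ≤ k < m. If moreover ⟨σ⟩_Q^{1/p'} ⟨w⟩_Q^{1/p} > [w,σ]_p / m, where [w,σ]_p = sup over cubes of ⟨w⟩_Q^{1/p}⟨σ⟩_Q^{1/p'} is finite and positive, then 2^{dm} m^{-p} < 1; in particular m is bounded by a constant depending only on d and p. -/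
open MeasureTheory ENNReal

noncomputable section

/-- The axis-parallel half-open cube with lower corner `c` and side length `l`. -/
def cube {d : ℕ} (c : Fin d → ℝ) (l : ℝ) : Set (Fin d → ℝ) :=
  {x | ∀ i, c i ≤ x i ∧ x i < c i + l}

/-- The average `⟨μ⟩_Q = μ(Q)/|Q|` of a measure over the cube with corner `c`, side `l`. -/
def cubeAvg {d : ℕ} (μ : Measure (Fin d → ℝ)) (c : Fin d → ℝ) (l : ℝ) : ℝ≥0∞ :=
  μ (cube c l) / ENNReal.ofReal (l ^ d)

/-- The Hardy–Littlewood maximal function of a measure, `M μ (x) = sup_{Q ∋ x} ⟨μ⟩_Q`. -/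
def maximal {d : ℕ} (μ : Measure (Fin d → ℝ)) (x : Fin d → ℝ) : ℝ≥0∞ :=
  ⨆ (c : Fin d → ℝ) (l : ℝ) (_ : 0 < l) (_ : x ∈ cube c l), cubeAvg μ c l

/-- The two-weight `A_p` constant `[w,σ]_p = sup_Q ⟨w⟩_Q^{1/p} ⟨σ⟩_Q^{1/p'}`. -/
def ApConst {d : ℕ} (w σ : Measure (Fin d → ℝ)) (p : ℝ) : ℝ≥0∞ :=
  ⨆ (c : Fin d → ℝ) (l : ℝ) (_ : 0 < l),
    cubeAvg w c l ^ (1 / p) * cubeAvg σ c l ^ ((p - 1) / p)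

/-- A dyadic grid: a family of cubes (given by corner and side length), each of side
`2^k` for some `k : ℤ`, any two nested or disjoint, and for each scale the cubes at
that scale partition `ℝ^d`. -/
structure IsDyadicGrid {d : ℕ} (𝒟 : Set ((Fin d → ℝ) × ℝ)) : Prop where
  scale : ∀ q ∈ 𝒟, ∃ k : ℤ, q.2 = (2 : ℝ) ^ k
  nested : ∀ q ∈ 𝒟, ∀ q' ∈ 𝒟,
    cube q.1 q.2 ⊆ cube q'.1 q'.2 ∨ cube q'.1 q'.2 ⊆ cube q.1 q.2 ∨
      Disjoint (cube q.1 q.2) (cube q'.1 q'.2)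
  partition : ∀ (k : ℤ) (x : Fin d → ℝ),
    ∃! q : (Fin d → ℝ) × ℝ, q ∈ 𝒟 ∧ q.2 = (2 : ℝ) ^ k ∧ x ∈ cube q.1 q.2

/-- The dyadic maximal function of a measure relative to a grid `𝒟`. -/
def dyadicMaximal {d : ℕ} (𝒟 : Set ((Fin d → ℝ) × ℝ)) (μ : Measure (Fin d → ℝ))
    (x : Fin d → ℝ) : ℝ≥0∞ :=
  ⨆ (q : (Fin d → ℝ) × ℝ) (_ : q ∈ 𝒟) (_ : x ∈ cube q.1 q.2), cubeAvg μ q.1 q.2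

/-- With `D = 2^{d(p+1)/(p-1)}`: if the doubling fails at every level up to the `m`-th
ancestor, and the local `A_p` product at `Q` exceeds `[w,σ]_p/m`, then `2^{dm} m^{-p} < 1`. -/
theorem stmt3 {d : ℕ} (p : ℝ) (hp : 1 < p) (w σ : Measure (Fin d → ℝ))
    (m : ℕ) (hm : 0 < m) (c : ℕ → Fin d → ℝ) (l : ℝ) (hl : 0 < l)
    (hnest : ∀ k : ℕ, cube (c k) ((2 : ℝ) ^ k * l) ⊆ cube (c (k + 1)) ((2 : ℝ) ^ (k + 1) * l))
    (hdoub : ∀ k < m,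
      (2 : ℝ≥0∞) ^ ((d : ℝ) * (p + 1) / (p - 1)) * σ (cube (c k) ((2 : ℝ) ^ k * l)) ≤
        σ (cube (c (k + 1)) ((2 : ℝ) ^ (k + 1) * l)))
    (hA0 : ApConst w σ p ≠ 0) (hA : ApConst w σ p ≠ ∞)
    (hbig : ApConst w σ p / (m : ℝ≥0∞) <
      cubeAvg σ (c 0) ((2 : ℝ) ^ (0 : ℕ) * l) ^ ((p - 1) / p) *
        cubeAvg w (c 0) ((2 : ℝ) ^ (0 : ℕ) * l) ^ (1 / p)) :
    (2 : ℝ) ^ (d * m) * (m : ℝ) ^ (-p) < 1 := by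
  -- notation
  set Q : ℕ → Set (Fin d → ℝ) := fun k => cube (c k) ((2 : ℝ) ^ k * l) with hQ
  have hp0 : (0:ℝ) < p := lt_trans one_pos hp
  have hp0' : p ≠ 0 := ne_of_gt hp0
  have hp1 : p - 1 ≠ 0 := sub_ne_zero.mpr (ne_of_gt hp)
  have hip : (0:ℝ) ≤ 1 / p := by positivity
  have hipq : (0:ℝ) ≤ (p - 1) / p := by
    apply div_nonneg (by linarith) (le_of_lt hp0)
  -- Q 0 ⊆ Q k
  have hsub : ∀ k : ℕ, Q 0 ⊆ Q k := by
    intro k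
    induction k with
    | zero => exact subset_rfl
    | succ n ih => exact ih.trans (hnest n)
  -- sigma doubling iterated
  set D : ℝ≥0∞ := (2 : ℝ≥0∞) ^ ((d : ℝ) * (p + 1) / (p - 1)) with hD
  have hsig : ∀ n ≤ m, D ^ n * σ (Q 0) ≤ σ (Q n) := by
    intro n hn
    induction n with
    | zero => simp
    | succ k ih =>
      have hk : k ≤ m := Nat.le_of_succ_le hn
      have hk' : k < m := Nat.lt_of_succ_le hn
      calc D ^ (k+1) * σ (Q 0) = D * (D ^ k * σ (Q 0)) := by ring
        _ ≤ D * σ (Q k) := mul_le_mul_right (ih hk) D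
        _ ≤ σ (Q (k+1)) := hdoub k hk'
  -- volumes
  have h2ne0 : ((2:ℝ≥0∞) ^ (d*m) : ℝ≥0∞) ≠ 0 := by positivity
  have h2netop : ((2:ℝ≥0∞) ^ (d*m) : ℝ≥0∞) ≠ ⊤ := by
    exact pow_ne_top (by norm_num)
  have hvol : ENNReal.ofReal (((2:ℝ) ^ m * l) ^ d) =
      (2:ℝ≥0∞) ^ (d*m) * ENNReal.ofReal (l ^ d) := by
    rw [mul_pow, ← pow_mul, ENNReal.ofReal_mul (by positivity),
      ENNReal.ofReal_pow (by norm_num), ENNReal.ofReal_ofNat]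
    ring_nf
  -- division helper
  have haux : ∀ a b : ℝ≥0∞, a / ((2:ℝ≥0∞) ^ (d*m) * b) =
      ((2:ℝ≥0∞) ^ (d*m))⁻¹ * (a / b) := by
    intro a b
    rw [div_eq_mul_inv, ENNReal.mul_inv (Or.inl h2ne0) (Or.inl h2netop),
      div_eq_mul_inv]
    ring
  -- average lower bounds at level m
  have hwavg : ((2:ℝ≥0∞) ^ (d*m))⁻¹ * cubeAvg w (c 0) ((2:ℝ) ^ (0:ℕ) * l) ≤
      cubeAvg w (c m) ((2:ℝ) ^ m * l) := by
    have h0 : Q 0 = cube (c 0) l := by simp [hQ]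
    unfold cubeAvg
    simp only [pow_zero, one_mul]
    rw [hvol, haux, ← h0]
    exact mul_le_mul_right (ENNReal.div_le_div_right (measure_mono (hsub m)) _) _
  have hsavg : D ^ m * ((2:ℝ≥0∞) ^ (d*m))⁻¹ * cubeAvg σ (c 0) ((2:ℝ) ^ (0:ℕ) * l) ≤
      cubeAvg σ (c m) ((2:ℝ) ^ m * l) := by
    have h0 : Q 0 = cube (c 0) l := by simp [hQ]
    unfold cubeAvg
    simp only [pow_zero, one_mul]
    rw [hvol, haux, ← h0]
    calc D ^ m * ((2:ℝ≥0∞) ^ (d*m))⁻¹ * (σ (Q 0) / ENNReal.ofReal (l ^ d))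
        = ((2:ℝ≥0∞) ^ (d*m))⁻¹ * ((D ^ m * σ (Q 0)) / ENNReal.ofReal (l ^ d)) := by
          rw [div_eq_mul_inv, div_eq_mul_inv]; ring
      _ ≤ ((2:ℝ≥0∞) ^ (d*m))⁻¹ * (σ (Q m) / ENNReal.ofReal (l ^ d)) :=
          mul_le_mul_right (ENNReal.div_le_div_right (hsig m le_rfl) _) _
  -- ApConst dominates the level-m product
  have hAm : cubeAvg w (c m) ((2:ℝ) ^ m * l) ^ (1/p) *
      cubeAvg σ (c m) ((2:ℝ) ^ m * l) ^ ((p-1)/p) ≤ ApConst w σ p := by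
    unfold ApConst
    refine le_iSup_of_le (c m) ?_
    refine le_iSup_of_le ((2:ℝ) ^ m * l) ?_
    exact le_iSup_of_le (by positivity) le_rfl
  -- constants as rpow of 2
  have h2r : ((2:ℝ≥0∞) ^ (d*m) : ℝ≥0∞) = (2:ℝ≥0∞) ^ (((d*m : ℕ) : ℝ)) := by
    rw [ENNReal.rpow_natCast]
  have hDm : D ^ m = (2:ℝ≥0∞) ^ ((d : ℝ) * (p + 1) / (p - 1) * (m:ℝ)) := by
    rw [hD, ENNReal.rpow_mul, ENNReal.rpow_natCast]
  -- the key constant computation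
  have hkey : (2:ℝ≥0∞) ^ (((d*m : ℕ):ℝ) / p) *
      (cubeAvg σ (c 0) ((2:ℝ) ^ (0:ℕ) * l) ^ ((p-1)/p) *
        cubeAvg w (c 0) ((2:ℝ) ^ (0:ℕ) * l) ^ (1/p)) ≤ ApConst w σ p := by
    refine le_trans ?_ hAm
    have hw' : (((2:ℝ≥0∞) ^ (d*m))⁻¹ * cubeAvg w (c 0) ((2:ℝ) ^ (0:ℕ) * l)) ^ (1/p) ≤
        cubeAvg w (c m) ((2:ℝ) ^ m * l) ^ (1/p) := ENNReal.rpow_le_rpow hwavg hip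
    have hs' : (D ^ m * ((2:ℝ≥0∞) ^ (d*m))⁻¹ * cubeAvg σ (c 0) ((2:ℝ) ^ (0:ℕ) * l)) ^ ((p-1)/p)
        ≤ cubeAvg σ (c m) ((2:ℝ) ^ m * l) ^ ((p-1)/p) := ENNReal.rpow_le_rpow hsavg hipq
    refine le_trans ?_ (mul_le_mul' hw' hs')
    rw [ENNReal.mul_rpow_of_nonneg _ _ hip, ENNReal.mul_rpow_of_nonneg _ _ hipq,
      ENNReal.mul_rpow_of_nonneg _ _ hipq]
    have e1 : (((2:ℝ≥0∞) ^ (d*m))⁻¹) ^ (1/p) = (2:ℝ≥0∞) ^ (-(((d*m:ℕ):ℝ)) * (1/p)) := by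
      rw [h2r, ← ENNReal.rpow_neg, ← ENNReal.rpow_mul]
    have e2 : (((2:ℝ≥0∞) ^ (d*m))⁻¹) ^ ((p-1)/p) =
        (2:ℝ≥0∞) ^ (-(((d*m:ℕ):ℝ)) * ((p-1)/p)) := by
      rw [h2r, ← ENNReal.rpow_neg, ← ENNReal.rpow_mul]
    have e3 : (D ^ m) ^ ((p-1)/p) =
        (2:ℝ≥0∞) ^ ((d : ℝ) * (p + 1) / (p - 1) * (m:ℝ) * ((p-1)/p)) := by
      rw [hDm, ← ENNReal.rpow_mul]
    rw [e1, e2, e3]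
    have hcomb : (2:ℝ≥0∞) ^ (-(((d*m:ℕ):ℝ)) * (1/p)) *
        ((2:ℝ≥0∞) ^ ((d : ℝ) * (p + 1) / (p - 1) * (m:ℝ) * ((p-1)/p)) *
          (2:ℝ≥0∞) ^ (-(((d*m:ℕ):ℝ)) * ((p-1)/p))) = (2:ℝ≥0∞) ^ (((d*m:ℕ):ℝ) / p) := by
      rw [← ENNReal.rpow_add _ _ (by norm_num) (by norm_num),
        ← ENNReal.rpow_add _ _ (by norm_num) (by norm_num)]
      congr 1
      push_cast
      field_simp
      ring
    rw [← hcomb]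
    exact le_of_eq (by ring)
  -- conclude 2^{dm/p} < m in ENNReal
  have hmne0 : (m : ℝ≥0∞) ≠ 0 := Nat.cast_ne_zero.mpr hm.ne'
  have hmnetop : (m : ℝ≥0∞) ≠ ⊤ := natCast_ne_top m
  have hcne0 : ((2:ℝ≥0∞) ^ (((d*m : ℕ):ℝ) / p) : ℝ≥0∞) ≠ 0 := by
    simp [ENNReal.rpow_eq_zero_iff]
  have hcnetop : ((2:ℝ≥0∞) ^ (((d*m : ℕ):ℝ) / p) : ℝ≥0∞) ≠ ⊤ := by
    exact ne_of_lt (ENNReal.rpow_lt_top_of_nonneg (by positivity) (by norm_num))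
  have hlt : (2:ℝ≥0∞) ^ (((d*m : ℕ):ℝ) / p) * (ApConst w σ p / (m : ℝ≥0∞)) <
      ApConst w σ p :=
    lt_of_lt_of_le ((ENNReal.mul_lt_mul_iff_right hcne0 hcnetop).mpr hbig) hkey
  have hlt2 : (2:ℝ≥0∞) ^ (((d*m : ℕ):ℝ) / p) < (m : ℝ≥0∞) := by
    by_contra hcon
    push_neg at hcon
    have : ApConst w σ p ≤ (2:ℝ≥0∞) ^ (((d*m : ℕ):ℝ) / p) * (ApConst w σ p / (m : ℝ≥0∞)) := by
      calc ApConst w σ p = ApConst w σ p / (m : ℝ≥0∞) * (m : ℝ≥0∞) :=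
            (ENNReal.div_mul_cancel hmne0 hmnetop).symm
        _ ≤ ApConst w σ p / (m : ℝ≥0∞) * (2:ℝ≥0∞) ^ (((d*m : ℕ):ℝ) / p) :=
            mul_le_mul_right hcon _
        _ = _ := mul_comm _ _
    exact absurd (lt_of_le_of_lt this hlt) (lt_irrefl _)
  -- raise to power p
  have hlt3 : (2:ℝ≥0∞) ^ (((d*m : ℕ):ℝ)) < (m : ℝ≥0∞) ^ p := by
    have := ENNReal.rpow_lt_rpow hlt2 hp0
    rwa [← ENNReal.rpow_mul, div_mul_cancel₀ _ hp0'] at this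
  -- transfer to ℝ
  have hreal : (2:ℝ) ^ (((d*m : ℕ):ℝ)) < (m : ℝ) ^ p := by
    have h2t : ((2:ℝ≥0∞) ^ (((d*m : ℕ):ℝ)) : ℝ≥0∞) ≠ ⊤ :=
      ne_of_lt (ENNReal.rpow_lt_top_of_nonneg (by positivity) (by norm_num))
    have hmt : ((m : ℝ≥0∞) ^ p : ℝ≥0∞) ≠ ⊤ :=
      ne_of_lt (ENNReal.rpow_lt_top_of_nonneg (le_of_lt hp0) hmnetop)
    have := (ENNReal.toReal_lt_toReal h2t hmt).mpr hlt3
    rwa [← ENNReal.toReal_rpow, ← ENNReal.toReal_rpow, ENNReal.toReal_ofNat,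
      ENNReal.toReal_natCast] at this
  have hmpos : (0:ℝ) < (m : ℝ) := by exact_mod_cast hm
  rw [Real.rpow_neg (le_of_lt hmpos), ← div_eq_mul_inv,
    div_lt_one (Real.rpow_pos_of_pos hmpos p), ← Real.rpow_natCast 2 (d*m)]
  exact hreal
end
end

section
/- There exist finitely many (at most 3^d) dyadic grids 𝒟_1, ..., 𝒟_{3^d} on ℝ^d and a constant C depending only on d such that for every nonnegative locally integrable f, M f ≤ C · max_{1 ≤ j ≤ 3^d} M_{𝒟_j} f pointwise. -/
open MeasureTheory ENNReal

noncomputable section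

namespace Stmt8Aux

variable {d : ℕ}

/-- corner of a shifted dyadic cube -/
def corner (t : Fin d → ℝ) (k : ℤ) (m : Fin d → ℤ) : Fin d → ℝ :=
  fun i => 2 ^ k * (m i + (-1) ^ k * t i)

def shiftGrid (t : Fin d → ℝ) : Set ((Fin d → ℝ) × ℝ) :=
  {q | ∃ k m, q = (corner t k m, (2:ℝ) ^ k)}

lemma two_zpow_pos (k : ℤ) : (0:ℝ) < 2 ^ k := zpow_pos (by norm_num) k

lemma mem_cube_iff (t : Fin d → ℝ) (k : ℤ) (m : Fin d → ℤ) (x : Fin d → ℝ) :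
    x ∈ cube (corner t k m) ((2:ℝ) ^ k) ↔
      ∀ i, ⌊x i / 2 ^ k - (-1:ℝ) ^ k * t i⌋ = m i := by
  have h2 : (0:ℝ) < 2 ^ k := two_zpow_pos k
  unfold cube corner
  simp only [Set.mem_setOf_eq]
  refine forall_congr' fun i => ?_
  rw [Int.floor_eq_iff]
  have hx : x i = 2 ^ k * (x i / 2 ^ k) := (mul_div_cancel₀ _ (ne_of_gt h2)).symm
  constructor
  · rintro ⟨h1, h3⟩
    constructor
    · nlinarith [h1, hx]
    · nlinarith [h3, hx]
  · rintro ⟨h1, h3⟩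
    constructor
    · nlinarith [h1, hx]
    · nlinarith [h3, hx]

lemma scale_inj {k k' : ℤ} (h : (2:ℝ) ^ k = 2 ^ k') : k = k' :=
  zpow_right_injective₀ (by norm_num) (by norm_num) h

/-- same scale: equal or disjoint -/
lemma eq_or_disjoint (t : Fin d → ℝ) (k : ℤ) (m m' : Fin d → ℤ) :
    m = m' ∨ Disjoint (cube (corner t k m) ((2:ℝ)^k)) (cube (corner t k m') ((2:ℝ)^k)) := by
  by_cases h : m = m'
  · exact Or.inl h
  · refine Or.inr (Set.disjoint_left.mpr fun x hx hx' => h ?_)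
    funext i
    rw [mem_cube_iff] at hx hx'
    rw [← hx i, ← hx' i]

/-- one-step ascend -/
lemma ascend (b : Fin d → Fin 2) (k : ℤ) (m : Fin d → ℤ) :
    ∃ m' : Fin d → ℤ,
      cube (corner (fun i => ((b i : ℕ) : ℝ) / 3) k m) ((2:ℝ)^k) ⊆
        cube (corner (fun i => ((b i : ℕ) : ℝ) / 3) (k+1) m') ((2:ℝ)^(k+1)) := by
  set t : Fin d → ℝ := fun i => ((b i : ℕ) : ℝ) / 3 with ht
  have hε : ((-1:ℝ)) ^ (k+1) = -((-1:ℝ)) ^ k := by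
    rw [zpow_add₀ (by norm_num : (-1:ℝ) ≠ 0)]; ring
  have h2 : (0:ℝ) < 2 ^ k := two_zpow_pos k
  have h2' : ((2:ℝ)) ^ (k+1) = 2 * 2 ^ k := by
    rw [zpow_add₀ (by norm_num : (2:ℝ) ≠ 0)]; ring
  -- ι i : ℤ with (ι i : ℝ) = (-1)^k * (3 * t i)
  have hsgn : ((-1:ℝ))^k = 1 ∨ ((-1:ℝ))^k = -1 := by
    rcases Int.even_or_odd k with h | h
    · exact Or.inl (Even.neg_one_zpow h)
    · exact Or.inr (Odd.neg_one_zpow h)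
  set ι : Fin d → ℤ := fun i => if ((-1:ℝ))^k = 1 then (b i : ℕ) else -(b i : ℕ) with hι
  have hιval : ∀ i, ((ι i : ℝ)) = (-1:ℝ)^k * (3 * t i) := by
    intro i
    have h3 : (3:ℝ) * t i = ((b i : ℕ) : ℝ) := by simp only [ht]; ring
    rcases hsgn with h | h
    · simp [hι, h, h3]
    · have hne : ((-1:ℝ))^k ≠ 1 := by rw [h]; norm_num
      have hval : ι i = -((b i : ℕ) : ℤ) := by simp [hι, if_neg hne]
      rw [hval, h, h3]
      push_cast
      ring
  set n : Fin d → ℤ := fun i => m i + ι i with hn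
  refine ⟨fun i => n i / 2, fun x hx => ?_⟩
  intro i
  have hxi := hx i
  simp only [corner] at hxi ⊢
  have hdiv : 2 * (n i / 2) ≤ n i ∧ n i ≤ 2 * (n i / 2) + 1 := by
    have := Int.mul_ediv_add_emod (n i) 2
    have h0 : 0 ≤ n i % 2 := Int.emod_nonneg _ (by norm_num)
    have h1 : n i % 2 < 2 := Int.emod_lt_of_pos _ (by norm_num)
    omega
  have hA : (2:ℝ)^(k+1) * ((n i / 2 : ℤ) + (-1:ℝ)^(k+1) * t i) ≤ 2^k * (m i + (-1:ℝ)^k * t i) := by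
    rw [hε, h2']
    have hcast : ((2 * (n i / 2) : ℤ) : ℝ) ≤ ((n i : ℤ) : ℝ) := by exact_mod_cast hdiv.1
    push_cast [hn] at hcast ⊢
    have := hιval i
    nlinarith [this, hcast, h2]
  have hB : (2:ℝ)^k * (m i + (-1:ℝ)^k * t i) + 2^k ≤
      2^(k+1) * ((n i / 2 : ℤ) + (-1:ℝ)^(k+1) * t i) + 2^(k+1) := by
    rw [hε, h2']
    have hcast : ((n i : ℤ) : ℝ) ≤ ((2 * (n i / 2) + 1 : ℤ) : ℝ) := by exact_mod_cast hdiv.2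
    push_cast [hn] at hcast ⊢
    have := hιval i
    nlinarith [this, hcast, h2]
  exact ⟨le_trans hA hxi.1, lt_of_lt_of_le hxi.2 hB⟩

lemma ascend_many (b : Fin d → Fin 2) (k k' : ℤ) (hk : k ≤ k') (m : Fin d → ℤ) :
    ∃ m' : Fin d → ℤ,
      cube (corner (fun i => ((b i : ℕ) : ℝ) / 3) k m) ((2:ℝ)^k) ⊆
        cube (corner (fun i => ((b i : ℕ) : ℝ) / 3) k' m') ((2:ℝ)^k') := by
  refine Int.le_induction (motive := fun j _ => ∃ m' : Fin d → ℤ,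
      cube (corner (fun i => ((b i : ℕ) : ℝ) / 3) k m) ((2:ℝ)^k) ⊆
        cube (corner (fun i => ((b i : ℕ) : ℝ) / 3) j m') ((2:ℝ)^j))
    ⟨m, subset_rfl⟩ ?_ k' hk
  rintro n hn ⟨m₁, hm₁⟩
  obtain ⟨m₂, hm₂⟩ := ascend b n m₁
  exact ⟨m₂, hm₁.trans hm₂⟩

lemma isDyadicGrid_shiftGrid (b : Fin d → Fin 2) :
    IsDyadicGrid (shiftGrid (fun i => ((b i : ℕ) : ℝ) / 3)) := by
  set t : Fin d → ℝ := fun i => ((b i : ℕ) : ℝ) / 3 with ht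
  constructor
  · rintro q ⟨k, m, rfl⟩
    exact ⟨k, rfl⟩
  · rintro q ⟨k, m, rfl⟩ q' ⟨k', m', rfl⟩
    simp only
    rcases le_total k k' with hk | hk
    · obtain ⟨m'', hm''⟩ := ascend_many b k k' hk m
      rcases eq_or_disjoint t k' m'' m' with h | h
      · subst h; exact Or.inl hm''
      · exact Or.inr (Or.inr (h.mono_left hm''))
    · obtain ⟨m'', hm''⟩ := ascend_many b k' k hk m'
      rcases eq_or_disjoint t k m'' m with h | h
      · subst h; exact Or.inr (Or.inl hm'')
      · exact Or.inr (Or.inr (h.symm.mono_right hm''))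
  · intro k x
    refine ⟨(corner t k (fun i => ⌊x i / 2 ^ k - (-1:ℝ) ^ k * t i⌋), (2:ℝ)^k),
      ⟨⟨k, _, rfl⟩, rfl, (mem_cube_iff t k _ x).mpr fun i => rfl⟩, ?_⟩
    rintro ⟨c', l'⟩ ⟨⟨k', m', hq⟩, hl', hx⟩
    obtain ⟨hc', hl''⟩ : c' = corner t k' m' ∧ l' = (2:ℝ)^k' := by
      rw [Prod.mk.injEq] at hq; exact hq
    simp only at hl' hx
    have hkk : k' = k := scale_inj (hl''.symm.trans hl')
    subst hkk
    subst hc'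
    subst hl''
    have hm := (mem_cube_iff t k' m' x).mp hx
    have : m' = fun i => ⌊x i / 2 ^ k' - (-1:ℝ) ^ k' * t i⌋ := by
      funext i; exact (hm i).symm
    rw [Prod.mk.injEq]
    exact ⟨by rw [this], rfl⟩


lemma exists_shift_fract (s u : ℝ) (hs : s = 1 ∨ s = -1) :
    ∃ β : Fin 2, Int.fract (u - s * (((β : ℕ) : ℝ) / 3)) ≤ 2/3 := by
  by_cases h : Int.fract u ≤ 2/3
  · refine ⟨0, ?_⟩
    simpa using h
  · push_neg at h
    have h1 : Int.fract u < 1 := Int.fract_lt_one u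
    have hfl : Int.fract u = u - ⌊u⌋ := rfl
    refine ⟨1, ?_⟩
    have hβ : (((1 : Fin 2) : ℕ) : ℝ) = 1 := by norm_num
    rw [hβ]
    rcases hs with rfl | rfl
    · have hw : ⌊u - 1 * (1/3)⌋ = ⌊u⌋ := by
        rw [Int.floor_eq_iff]
        constructor
        · linarith
        · push_cast
          have := Int.lt_floor_add_one u
          linarith
      have : Int.fract (u - 1 * (1/3)) = (u - 1 * (1/3)) - ⌊u - 1 * (1/3)⌋ := rfl
      rw [this, hw]
      linarith
    · have hw : ⌊u - (-1) * (1/3)⌋ = ⌊u⌋ + 1 := by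
        rw [Int.floor_eq_iff]
        constructor
        · push_cast; linarith
        · push_cast
          have := Int.lt_floor_add_one u
          linarith
      have : Int.fract (u - (-1) * (1/3)) = (u - (-1) * (1/3)) - ⌊u - (-1) * (1/3)⌋ := rfl
      rw [this, hw]
      push_cast
      linarith

lemma cover (c : Fin d → ℝ) (l : ℝ) (hl : 0 < l) :
    ∃ (b : Fin d → Fin 2) (k : ℤ) (m : Fin d → ℤ),
      cube c l ⊆ cube (corner (fun i => ((b i : ℕ) : ℝ) / 3) k m) ((2:ℝ)^k) ∧
        (2:ℝ)^k ≤ 6 * l := by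
  obtain ⟨n, hn⟩ := exists_mem_Ico_zpow (show (0:ℝ) < 3*l by linarith)
    (by norm_num : (1:ℝ) < 2)
  set k := n + 1 with hk
  have h2 : (0:ℝ) < 2 ^ k := two_zpow_pos k
  have h2e : (2:ℝ) ^ k = 2 ^ n * 2 := by
    rw [zpow_add₀ (by norm_num : (2:ℝ) ≠ 0)]; norm_num
  have hLlow : 3 * l < 2 ^ k := hn.2
  have hLhigh : (2:ℝ) ^ k ≤ 6 * l := by
    have := hn.1
    rw [h2e]; linarith
  set s := ((-1:ℝ)) ^ k with hsdef
  have hs : s = 1 ∨ s = -1 := by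
    rcases Int.even_or_odd k with h | h
    · exact Or.inl (Even.neg_one_zpow h)
    · exact Or.inr (Odd.neg_one_zpow h)
  choose β hβ using fun i => exists_shift_fract s (c i / 2 ^ k) hs
  refine ⟨β, k, fun i => ⌊c i / 2 ^ k - s * (((β i : ℕ) : ℝ) / 3)⌋, ?_, hLhigh⟩
  intro x hx i
  have hxi := hx i
  simp only [corner]
  set w : ℝ := c i / 2 ^ k - s * (((β i : ℕ) : ℝ) / 3) with hw
  have hfr : (⌊w⌋ : ℝ) = w - Int.fract w := by
    have : Int.fract w = w - ⌊w⌋ := rfl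
    linarith
  have hc : c i = 2 ^ k * (c i / 2 ^ k) := (mul_div_cancel₀ _ (ne_of_gt h2)).symm
  have hfr0 : 0 ≤ Int.fract w := Int.fract_nonneg w
  have hfr1 : Int.fract w ≤ 2/3 := hβ i
  have hm1 : (0:ℝ) ≤ 2 ^ k * Int.fract w := mul_nonneg h2.le hfr0
  have hm2 : 2 ^ k * Int.fract w ≤ 2 ^ k * (2/3) :=
    mul_le_mul_of_nonneg_left hfr1 h2.le
  rw [← hsdef]
  have hkey : 2 ^ k * ((⌊w⌋ : ℝ) + s * (((β i : ℕ) : ℝ) / 3)) = c i - 2 ^ k * Int.fract w := by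
    linear_combination (2:ℝ) ^ k * hfr + (2:ℝ) ^ k * hw - hc
  rw [hkey]
  constructor
  · linarith [hxi.1, hm1]
  · linarith [hxi.2, hm2, hLlow]

lemma cubeAvg_le (μ : Measure (Fin d → ℝ)) (c c' : Fin d → ℝ) (l L : ℝ)
    (hl : 0 < l) (hL : 0 < L) (hsub : cube c l ⊆ cube c' L) (hbd : L ≤ 6 * l) :
    cubeAvg μ c l ≤ (6:ℝ≥0∞) ^ d * cubeAvg μ c' L := by
  unfold cubeAvg
  have h1 : μ (cube c l) ≤ μ (cube c' L) := measure_mono hsub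
  set Ll := ENNReal.ofReal (l ^ d) with hLl
  set K := ENNReal.ofReal (L ^ d) with hK
  have hL0 : Ll ≠ 0 := (ENNReal.ofReal_pos.mpr (pow_pos hl d)).ne'
  have hLt : Ll ≠ ∞ := ENNReal.ofReal_ne_top
  have hK0 : K ≠ 0 := (ENNReal.ofReal_pos.mpr (pow_pos hL d)).ne'
  have hKt : K ≠ ∞ := ENNReal.ofReal_ne_top
  have hKC : K ≤ (6:ℝ≥0∞) ^ d * Ll := by
    have hr : L ^ d ≤ 6 ^ d * l ^ d := by
      calc L ^ d ≤ (6 * l) ^ d := pow_le_pow_left₀ hL.le hbd d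
        _ = 6 ^ d * l ^ d := by rw [mul_pow]
    calc K ≤ ENNReal.ofReal (6 ^ d * l ^ d) := ENNReal.ofReal_le_ofReal hr
      _ = ENNReal.ofReal (6 ^ d) * Ll := ENNReal.ofReal_mul (by positivity)
      _ = (6:ℝ≥0∞) ^ d * Ll := by
          rw [ENNReal.ofReal_pow (by norm_num : (0:ℝ) ≤ 6)]
          norm_num
  have h3 : K * Ll⁻¹ ≤ (6:ℝ≥0∞) ^ d := by
    calc K * Ll⁻¹ = K / Ll := rfl
      _ ≤ ((6:ℝ≥0∞) ^ d * Ll) / Ll := ENNReal.div_le_div_right hKC _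
      _ = (6:ℝ≥0∞) ^ d * (Ll / Ll) := by rw [mul_div_assoc]
      _ = (6:ℝ≥0∞) ^ d := by rw [ENNReal.div_self hL0 hLt, mul_one]
  have hinv : Ll⁻¹ ≤ (6:ℝ≥0∞) ^ d * K⁻¹ := by
    calc Ll⁻¹ = (K⁻¹ * K) * Ll⁻¹ := by rw [ENNReal.inv_mul_cancel hK0 hKt, one_mul]
      _ = K⁻¹ * (K * Ll⁻¹) := by rw [mul_assoc]
      _ ≤ K⁻¹ * (6:ℝ≥0∞) ^ d := mul_le_mul_right h3 _
      _ = (6:ℝ≥0∞) ^ d * K⁻¹ := mul_comm _ _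
  calc μ (cube c l) / Ll ≤ μ (cube c' L) / Ll := ENNReal.div_le_div_right h1 _
    _ = μ (cube c' L) * Ll⁻¹ := rfl
    _ ≤ μ (cube c' L) * ((6:ℝ≥0∞) ^ d * K⁻¹) := mul_le_mul_right hinv _
    _ = (6:ℝ≥0∞) ^ d * (μ (cube c' L) / K) := by
        rw [div_eq_mul_inv]; ring

end Stmt8Aux

/-- There are at most `3^d` dyadic grids whose maximal operators dominate the
Hardy–Littlewood maximal operator, up to a dimensional constant. -/
theorem stmt8 {d : ℕ} :
    ∃ n : ℕ, n ≤ 3 ^ d ∧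
      ∃ (𝒟 : Fin n → Set ((Fin d → ℝ) × ℝ)) (C : ℝ≥0∞),
        (∀ j, IsDyadicGrid (𝒟 j)) ∧ C ≠ ∞ ∧
        ∀ f : (Fin d → ℝ) → ℝ≥0∞, Measurable f → ∀ x : Fin d → ℝ,
          maximal (volume.withDensity f) x ≤
            C * ⨆ j, dyadicMaximal (𝒟 j) (volume.withDensity f) x := by
  refine ⟨2 ^ d, Nat.pow_le_pow_left (by norm_num) d,
    fun j => Stmt8Aux.shiftGrid (fun i => (((finFunctionFinEquiv.symm j) i : ℕ) : ℝ) / 3),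
    (6:ℝ≥0∞) ^ d, fun j => Stmt8Aux.isDyadicGrid_shiftGrid _,
    ENNReal.pow_ne_top ENNReal.ofNat_ne_top, ?_⟩
  intro f _ x
  set μ := volume.withDensity f with hμ
  refine iSup_le fun c => iSup_le fun l => iSup_le fun hl => iSup_le fun hx => ?_
  obtain ⟨b, k, m, hsub, hbd⟩ := Stmt8Aux.cover c l hl
  set t : Fin d → ℝ := fun i => ((b i : ℕ) : ℝ) / 3 with htdef
  set j : Fin (2 ^ d) := finFunctionFinEquiv b with hj
  have hDj : (fun i => (((finFunctionFinEquiv.symm j) i : ℕ) : ℝ) / 3) = t := by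
    rw [hj, Equiv.symm_apply_apply]
  have hdm : cubeAvg μ (Stmt8Aux.corner t k m) ((2:ℝ)^k) ≤
      dyadicMaximal (Stmt8Aux.shiftGrid t) μ x :=
    le_iSup_of_le (Stmt8Aux.corner t k m, (2:ℝ)^k)
      (le_iSup_of_le ⟨k, m, rfl⟩ (le_iSup_of_le (hsub hx) le_rfl))
  calc cubeAvg μ c l ≤ (6:ℝ≥0∞) ^ d * cubeAvg μ (Stmt8Aux.corner t k m) ((2:ℝ)^k) :=
        Stmt8Aux.cubeAvg_le μ c _ l ((2:ℝ)^k) hl (Stmt8Aux.two_zpow_pos k) hsub hbd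
    _ ≤ (6:ℝ≥0∞) ^ d * ⨆ j', dyadicMaximal
          (Stmt8Aux.shiftGrid (fun i => (((finFunctionFinEquiv.symm j') i : ℕ) : ℝ) / 3)) μ x := by
        refine mul_le_mul_right (le_iSup_of_le j ?_) _
        rw [hDj]
        exact hdm
end
end
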